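/- For every integer k ≥ 2 and every ε with 0 < ε < 1/2 there exists a unary MA-PostQFA M such that: a(c,x)+r(c,x) > 0 for all certificates and inputs; for every i ≥ 0, on certificate a^i and input a^(i^k) the acceptance probability of M is at least 1−ε; and for every n that is not a k-th power and every i ≥ 0, on certificate a^i and input a^n the rejection probability of M is at least 1−ε. Hence M verifies UPOLY(k) = { a^(i^k) : i ≥ 0 } with bounded error using certificates of length n^(1/k) for members. -/

import Mathlib

open Matrix

/-- A superoperator on `ℂ^m`: a finite family of `m×m` complex matrices `E_1,…,E_k`
with `∑ j, E_jᴴ E_j = I`. -/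
structure Superop (m : ℕ) where
  k : ℕ
  E : Fin k → Matrix (Fin m) (Fin m) ℂ
  valid : ∑ j, (E j)ᴴ * E j = 1

/-- Action of a superoperator on a density matrix: `ρ ↦ ∑ j, E_j ρ E_jᴴ`. -/
noncomputable def Superop.app {m : ℕ} (S : Superop m) (ρ : Matrix (Fin m) (Fin m) ℂ) :
    Matrix (Fin m) (Fin m) ℂ :=
  ∑ j, S.E j * ρ * (S.E j)ᴴ

/-- The initial density matrix `e₁ e₁†`. -/
def rho0 (m : ℕ) : Matrix (Fin m) (Fin m) ℂ :=
  Matrix.of fun j j' => if j.val = 0 ∧ j'.val = 0 then 1 else 0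

/-- An MA-PostQFA whose certificate and input symbols range over the type `Sym`:
superoperators for the markers `◐, ◑, ¢, $` and for each symbol, together with disjoint
sets of postselecting accepting and rejecting states. -/
structure MAPostQFA (Sym : Type) where
  m : ℕ
  Eopen : Superop m
  Eclose : Superop m
  Ecent : Superop m
  Edollar : Superop m
  Esym : Sym → Superop m
  Qacc : Finset (Fin m)
  Qrej : Finset (Fin m)
  disj : Disjoint Qacc Qrej

namespace MAPostQFA

variable {Sym : Type}

/-- The final density matrix on certificate `c` and input `x`: apply
`E_◐, E_{c_1}, …, E_{c_k}, E_◑, E_¢, E_{x_1}, …, E_{x_l}, E_$` in order to `ρ₀`. -/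
noncomputable def finalRho (M : MAPostQFA Sym) (c x : List Sym) : Matrix (Fin M.m) (Fin M.m) ℂ :=
  M.Edollar.app <|
    x.foldl (fun ρ s => (M.Esym s).app ρ) <|
      M.Ecent.app <| M.Eclose.app <|
        c.foldl (fun ρ s => (M.Esym s).app ρ) (M.Eopen.app (rho0 M.m))

/-- `a(c,x)`: total final weight on the postselecting accepting states. -/
noncomputable def aPr (M : MAPostQFA Sym) (c x : List Sym) : ℝ :=
  ∑ j ∈ M.Qacc, (M.finalRho c x j j).re

/-- `r(c,x)`: total final weight on the postselecting rejecting states. -/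
noncomputable def rPr (M : MAPostQFA Sym) (c x : List Sym) : ℝ :=
  ∑ j ∈ M.Qrej, (M.finalRho c x j j).re

/-- Acceptance probability `a/(a+r)` after postselection. -/
noncomputable def accProb (M : MAPostQFA Sym) (c x : List Sym) : ℝ :=
  M.aPr c x / (M.aPr c x + M.rPr c x)

/-- Rejection probability `r/(a+r)` after postselection. -/
noncomputable def rejProb (M : MAPostQFA Sym) (c x : List Sym) : ℝ :=
  M.rPr c x / (M.aPr c x + M.rPr c x)

end MAPostQFA

namespace UPolyProof
open scoped ComplexOrder

variable {d : ℕ}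

noncomputable def pad (M : Matrix (Fin d ⊕ Fin d) (Fin d ⊕ Fin d) ℂ) :
    Matrix (Fin (d + d)) (Fin (d + d)) ℂ :=
  M.submatrix finSumFinEquiv.symm finSumFinEquiv.symm

lemma pad_mul (M N : Matrix (Fin d ⊕ Fin d) (Fin d ⊕ Fin d) ℂ) :
    pad M * pad N = pad (M * N) :=
  submatrix_mul_equiv M N _ _ _

lemma pad_conjTranspose (M : Matrix (Fin d ⊕ Fin d) (Fin d ⊕ Fin d) ℂ) :
    (pad M)ᴴ = pad Mᴴ :=
  conjTranspose_submatrix _ _ _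

lemma pad_add (M N : Matrix (Fin d ⊕ Fin d) (Fin d ⊕ Fin d) ℂ) :
    pad M + pad N = pad (M + N) := rfl

lemma pad_one : (pad (1 : Matrix (Fin d ⊕ Fin d) (Fin d ⊕ Fin d) ℂ)) = 1 :=
  submatrix_one_equiv finSumFinEquiv.symm

noncomputable def outer (ψ : Fin d → ℂ) : Matrix (Fin d) (Fin d) ℂ :=
  vecMulVec ψ (star ψ)

lemma conj_outer (A : Matrix (Fin d) (Fin d) ℂ) (ψ : Fin d → ℂ) :
    A * outer ψ * Aᴴ = outer (A *ᵥ ψ) := by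
  ext i j
  simp only [outer, mul_apply, vecMulVec_apply, mulVec, dotProduct, conjTranspose_apply,
    Pi.star_apply, Finset.sum_mul, Finset.mul_sum]
  rw [Finset.sum_comm]
  congr 1; ext l
  rw [star_sum, Finset.mul_sum]
  congr 1; ext t
  simp only [star_mul']
  ring

noncomputable def frob (M : Matrix (Fin d) (Fin d) ℂ) : ℝ :=
  ∑ j, ∑ l, Complex.normSq (M j l)

lemma frob_nonneg (M : Matrix (Fin d) (Fin d) ℂ) : 0 ≤ frob M :=
  Finset.sum_nonneg fun _ _ => Finset.sum_nonneg fun _ _ => Complex.normSq_nonneg _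

noncomputable def sc (M : Matrix (Fin d) (Fin d) ℂ) : ℝ := Real.sqrt (frob M + 1)

lemma sc_pos (M : Matrix (Fin d) (Fin d) ℂ) : 0 < sc M :=
  Real.sqrt_pos.2 (by linarith [frob_nonneg M])

lemma sc_sq (M : Matrix (Fin d) (Fin d) ℂ) : sc M ^ 2 = frob M + 1 :=
  Real.sq_sqrt (by linarith [frob_nonneg M])

noncomputable def scaleA (M : Matrix (Fin d) (Fin d) ℂ) : Matrix (Fin d) (Fin d) ℂ :=
  (((sc M : ℝ) : ℂ))⁻¹ • M

lemma row_bound (M : Matrix (Fin d) (Fin d) ℂ) (x : Fin d → ℂ) :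
    ∑ j, Complex.normSq ((M *ᵥ x) j) ≤ frob M * ∑ l, Complex.normSq (x l) := by
  rw [frob, Finset.sum_mul]
  refine Finset.sum_le_sum fun j _ => ?_
  have h1 : ‖(M *ᵥ x) j‖ ≤ ∑ l, ‖M j l‖ * ‖x l‖ := by
    refine le_trans (norm_sum_le Finset.univ fun l => M j l * x l) ?_
    simp [mulVec, dotProduct]
  calc Complex.normSq ((M *ᵥ x) j) = ‖(M *ᵥ x) j‖ ^ 2 := (Complex.sq_norm _).symm
    _ ≤ (∑ l, ‖M j l‖ * ‖x l‖) ^ 2 := by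
        exact pow_le_pow_left₀ (norm_nonneg _) h1 2
    _ ≤ (∑ l, ‖M j l‖ ^ 2) * ∑ l, ‖x l‖ ^ 2 :=
        Finset.sum_mul_sq_le_sq_mul_sq _ _ _
    _ = (∑ l, Complex.normSq (M j l)) * ∑ l, Complex.normSq (x l) := by
        simp [Complex.sq_norm]

lemma star_dot (v : Fin d → ℂ) :
    star v ⬝ᵥ v = ((∑ j, Complex.normSq (v j) : ℝ) : ℂ) := by
  simp [dotProduct, Complex.normSq_eq_conj_mul_self]

lemma exists_compl (M : Matrix (Fin d) (Fin d) ℂ) :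
    ∃ B, (scaleA M)ᴴ * scaleA M + Bᴴ * B = 1 := by
  set A := scaleA M with hA
  have hpsd : (1 - Aᴴ * A).PosSemidef := by
    rw [posSemidef_iff_dotProduct_mulVec]
    constructor
    · simp [Matrix.IsHermitian, sub_eq_add_neg, conjTranspose_mul]
    · intro x
      have h1 : (1 - Aᴴ * A) *ᵥ x = x - Aᴴ *ᵥ (A *ᵥ x) := by
        rw [sub_mulVec, one_mulVec, ← mulVec_mulVec]
      rw [h1, dotProduct_sub, Matrix.dotProduct_mulVec, ← star_mulVec, star_dot, star_dot]
      rw [← Complex.ofReal_sub, Complex.zero_le_real]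
      have h2 : ∀ j, Complex.normSq ((A *ᵥ x) j)
          = (sc M)⁻¹ ^ 2 * Complex.normSq ((M *ᵥ x) j) := by
        intro j
        have : (A *ᵥ x) j = ((sc M : ℂ))⁻¹ * (M *ᵥ x) j := by
          simp [hA, scaleA, smul_mulVec]
        rw [this, Complex.normSq_mul]
        norm_num [Complex.normSq_eq_norm_sq, Complex.norm_real]
      have h3 : ∑ j, Complex.normSq ((A *ᵥ x) j)
          = (sc M)⁻¹ ^ 2 * ∑ j, Complex.normSq ((M *ᵥ x) j) := by
        rw [Finset.mul_sum]; exact Finset.sum_congr rfl fun j _ => h2 j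
      have h4 := row_bound M x
      have hscpos := sc_pos M
      have hscsq := sc_sq M
      have hinv : (sc M)⁻¹ ^ 2 * (sc M) ^ 2 = 1 := by
        field_simp
      have hX : (0:ℝ) ≤ ∑ l, Complex.normSq (x l) :=
        Finset.sum_nonneg fun _ _ => Complex.normSq_nonneg _
      have hinvnn : (0:ℝ) ≤ (sc M)⁻¹ ^ 2 := sq_nonneg _
      rw [h3, sub_nonneg]
      calc (sc M)⁻¹ ^ 2 * ∑ j, Complex.normSq ((M *ᵥ x) j)
          ≤ (sc M)⁻¹ ^ 2 * (frob M * ∑ l, Complex.normSq (x l)) :=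
            mul_le_mul_of_nonneg_left h4 hinvnn
        _ ≤ ∑ l, Complex.normSq (x l) := by
            have hF : frob M = sc M ^ 2 - 1 := by linarith
            have h7 : (sc M)⁻¹ ^ 2 * (sc M) ^ 2 * (∑ l, Complex.normSq (x l))
                = ∑ l, Complex.normSq (x l) := by rw [hinv, one_mul]
            nlinarith [mul_nonneg hinvnn hX]
  obtain ⟨B, hB⟩ : ∃ B : Matrix (Fin d) (Fin d) ℂ, 1 - Aᴴ * A = Bᴴ * B := by
    open scoped MatrixOrder in
    obtain ⟨B, hB⟩ := CStarAlgebra.nonneg_iff_eq_star_mul_self.mp hpsd.nonneg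
    exact ⟨B, hB⟩
  exact ⟨B, by rw [← hB, add_sub_cancel]⟩

noncomputable def mkSup (A B : Matrix (Fin d) (Fin d) ℂ) (h : Aᴴ * A + Bᴴ * B = 1) :
    Superop (d + d) where
  k := 3
  E := ![pad (fromBlocks A 0 0 0), pad (fromBlocks 0 0 B 0), pad (fromBlocks 0 0 0 1)]
  valid := by
    rw [Fin.sum_univ_three]
    simp only [Matrix.cons_val_zero, Matrix.cons_val_one, Matrix.head_cons, Matrix.cons_val_two,
      Matrix.tail_cons, pad_conjTranspose, pad_mul, pad_add, fromBlocks_conjTranspose,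
      fromBlocks_multiply, fromBlocks_add]
    simp only [Matrix.mul_zero, Matrix.zero_mul, Matrix.mul_one, Matrix.one_mul,
      conjTranspose_zero, conjTranspose_one, add_zero, zero_add, h]
    rw [fromBlocks_one, pad_one]

lemma mkSup_app (A B : Matrix (Fin d) (Fin d) ℂ) (h : Aᴴ * A + Bᴴ * B = 1)
    (ψ : Fin d → ℂ) (γ : Matrix (Fin d) (Fin d) ℂ) :
    (mkSup A B h).app (pad (fromBlocks (outer ψ) 0 0 γ)) =
      pad (fromBlocks (outer (A *ᵥ ψ)) 0 0 (B * outer ψ * Bᴴ + γ)) := by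
  rw [Superop.app]
  simp only [mkSup]
  change ∑ j : Fin 3, _ = _
  rw [Fin.sum_univ_three]
  simp only [ Matrix.cons_val_zero, Matrix.cons_val_one, Matrix.head_cons,
    Matrix.cons_val_two, Matrix.tail_cons, pad_conjTranspose, pad_mul, pad_add,
    fromBlocks_conjTranspose, fromBlocks_multiply, fromBlocks_add]
  simp only [Matrix.mul_zero, Matrix.zero_mul, Matrix.mul_one, Matrix.one_mul,
    conjTranspose_zero, conjTranspose_one, add_zero, zero_add, conj_outer]

variable (k : ℕ) (ε : ℝ)

/-- Pascal + counter work matrix for the symbol `a`. -/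
noncomputable def Ma : Matrix (Fin (k+3)) (Fin (k+3)) ℂ :=
  Matrix.of fun j l =>
    if j.val ≤ k ∧ l.val ≤ k then (Nat.choose j.val l.val : ℂ)
    else if j.val = k+1 ∧ l.val = k+1 then 1
    else if j.val = k+2 ∧ (l.val = k+1 ∨ l.val = k+2) then 1
    else 0

/-- Work matrix for `¢`. -/
noncomputable def Mc : Matrix (Fin (k+3)) (Fin (k+3)) ℂ :=
  Matrix.of fun j l =>
    if j.val = k+1 ∧ l.val = 0 then 1
    else if j.val = k+2 ∧ l.val = k then -1
    else 0

/-- Work matrix for `$`. -/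
noncomputable def Md : Matrix (Fin (k+3)) (Fin (k+3)) ℂ :=
  Matrix.of fun j l =>
    if j.val = 0 ∧ l.val = k+1 then (Real.sqrt ε : ℂ)
    else if j.val = 1 ∧ l.val = k+2 then 1
    else 0

/-- State during the certificate phase after reading `i` symbols. -/
noncomputable def psiv (i : ℕ) : Fin (k+3) → ℂ :=
  fun j => if j.val ≤ k then (i : ℂ) ^ j.val else 0

/-- State during the input phase after reading `t` symbols (certificate length `i`). -/
noncomputable def phiv (i t : ℕ) : Fin (k+3) → ℂ :=
  fun j => if j.val = k+1 then 1
    else if j.val = k+2 then (((t : ℝ) - (i : ℝ) ^ k : ℝ) : ℂ)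
    else 0

/-- Final state vector. -/
noncomputable def wv (i t : ℕ) : Fin (k+3) → ℂ :=
  fun j => if j.val = 0 then ((Real.sqrt ε : ℝ) : ℂ)
    else if j.val = 1 then (((t : ℝ) - (i : ℝ) ^ k : ℝ) : ℂ)
    else 0

lemma mulVec_eq_sum_range (M : Matrix (Fin (k+3)) (Fin (k+3)) ℂ) (v : Fin (k+3) → ℂ)
    (j : Fin (k+3)) (g : ℕ → ℂ) (hg : ∀ l : Fin (k+3), M j l * v l = g l.val) :
    (M *ᵥ v) j = ∑ l ∈ Finset.range (k+3), g l := by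
  rw [← Fin.sum_univ_eq_sum_range g (k+3)]
  simp only [mulVec, dotProduct]
  exact Finset.sum_congr rfl fun l _ => hg l

lemma mulVec_eq_split (M : Matrix (Fin (k+3)) (Fin (k+3)) ℂ) (v : Fin (k+3) → ℂ)
    (j : Fin (k+3)) (g : ℕ → ℂ) (hg : ∀ l : Fin (k+3), M j l * v l = g l.val) :
    (M *ᵥ v) j = (∑ l ∈ Finset.range (k+1), g l) + g (k+1) + g (k+2) := by
  rw [mulVec_eq_sum_range k M v j g hg]
  rw [show k+3 = (k+1)+1+1 from rfl, Finset.sum_range_succ, Finset.sum_range_succ]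

lemma Ma_psiv (i : ℕ) : Ma k *ᵥ psiv k i = psiv k (i+1) := by
  funext j
  rcases Nat.lt_or_ge j.val (k+1) with hj | hj
  · -- j.val ≤ k : binomial row
    have hj' : j.val ≤ k := by omega
    rw [mulVec_eq_sum_range k (Ma k) (psiv k i) j
      (fun l => if l ≤ k then (Nat.choose j.val l : ℂ) * (i : ℂ) ^ l else 0) ?_]
    · have h1 : ∑ l ∈ Finset.range (k+3),
          (if l ≤ k then (Nat.choose j.val l : ℂ) * (i : ℂ) ^ l else 0)
          = ∑ l ∈ Finset.range (j.val + 1), (Nat.choose j.val l : ℂ) * (i : ℂ) ^ l := by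
        rw [← Finset.sum_subset (Finset.range_subset_range.2 (by omega : j.val + 1 ≤ k + 3))]
        · exact Finset.sum_congr rfl fun l hl =>
            if_pos (by have := Finset.mem_range.1 hl; omega)
        · intro l hl hl'
          simp only [Finset.mem_range] at hl hl'
          by_cases h : l ≤ k
          · rw [if_pos h, Nat.choose_eq_zero_of_lt (by omega), Nat.cast_zero, zero_mul]
          · rw [if_neg h]
      rw [h1, psiv]
      simp only [if_pos hj']
      push_cast
      rw [add_pow]
      refine Finset.sum_congr rfl fun l hl => by rw [one_pow]; ring
    · intro l
      simp only [Ma, psiv, Matrix.of_apply]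
      split_ifs <;> simp_all <;> omega
  · rw [mulVec_eq_sum_range k (Ma k) (psiv k i) j (fun _ => 0) ?_]
    · rw [Finset.sum_const_zero, psiv]
      rw [if_neg (by omega)]
    · intro l
      simp only [Ma, psiv, Matrix.of_apply]
      split_ifs <;> simp_all <;> omega

lemma Mc_psiv (i : ℕ) : Mc k *ᵥ psiv k i = phiv k i 0 := by
  funext j
  rcases (by omega : j.val = k+1 ∨ j.val = k+2 ∨ j.val ≤ k) with hj | hj | hj
  · rw [mulVec_eq_split k (Mc k) (psiv k i) j (fun l => if l = 0 then 1 else 0) ?_]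
    · rw [Finset.sum_eq_single_of_mem 0 (Finset.mem_range.2 (by omega))
        (fun l _ hl => if_neg hl)]
      rw [if_pos rfl, if_neg (by omega), if_neg (by omega), phiv, if_pos hj]
      norm_num
    · intro l
      simp only [Mc, psiv, Matrix.of_apply]
      split_ifs <;> simp_all <;> omega
  · rw [mulVec_eq_split k (Mc k) (psiv k i) j
      (fun l => if l = k then -((i:ℂ) ^ k) else 0) ?_]
    · rw [Finset.sum_eq_single_of_mem k (Finset.mem_range.2 (by omega))
        (fun l _ hl => if_neg hl)]
      rw [if_pos rfl, if_neg (by omega), if_neg (by omega), phiv,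
        if_neg (by omega), if_pos hj]
      push_cast
      ring
    · intro l
      simp only [Mc, psiv, Matrix.of_apply]
      split_ifs <;> simp_all <;> omega
  · rw [mulVec_eq_split k (Mc k) (psiv k i) j (fun l => 0) ?_]
    · rw [Finset.sum_const_zero, phiv, if_neg (by omega), if_neg (by omega)]
      norm_num
    · intro l
      simp only [Mc, psiv, Matrix.of_apply]
      split_ifs <;> simp_all <;> omega

lemma Ma_phiv (i t : ℕ) : Ma k *ᵥ phiv k i t = phiv k i (t+1) := by
  funext j
  rcases (by omega : j.val = k+1 ∨ j.val = k+2 ∨ j.val ≤ k) with hj | hj | hj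
  · rw [mulVec_eq_split k (Ma k) (phiv k i t) j (fun l => if l = k+1 then 1 else 0) ?_]
    · rw [Finset.sum_eq_zero (fun l hl => if_neg (by have := Finset.mem_range.1 hl; omega)),
        if_pos rfl, if_neg (by omega), phiv, if_pos hj]
      norm_num
    · intro l
      simp only [Ma, phiv, Matrix.of_apply]
      split_ifs <;> simp_all <;> omega
  · rw [mulVec_eq_split k (Ma k) (phiv k i t) j
      (fun l => if l = k+1 then 1 else if l = k+2 then (((t:ℝ) - (i:ℝ)^k : ℝ) : ℂ) else 0) ?_]
    · rw [Finset.sum_eq_zero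
        (fun l hl => by
          have := Finset.mem_range.1 hl
          rw [if_neg (by omega), if_neg (by omega)]),
        if_pos rfl, if_neg (by omega), if_pos rfl, phiv, if_neg (by omega), if_pos hj]
      push_cast
      ring
    · intro l
      simp only [Ma, phiv, Matrix.of_apply]
      split_ifs <;> simp_all <;> omega
  · rw [mulVec_eq_split k (Ma k) (phiv k i t) j (fun l => 0) ?_]
    · rw [Finset.sum_const_zero, phiv, if_neg (by omega), if_neg (by omega)]
      norm_num
    · intro l
      simp only [Ma, phiv, Matrix.of_apply]
      split_ifs <;> simp_all <;> omega

lemma Md_phiv (i t : ℕ) : Md k ε *ᵥ phiv k i t = wv k ε i t := by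
  funext j
  rcases (by omega : j.val = 0 ∨ j.val = 1 ∨ (¬ j.val = 0 ∧ ¬ j.val = 1)) with hj | hj | hj
  · rw [mulVec_eq_split k (Md k ε) (phiv k i t) j
      (fun l => if l = k+1 then ((Real.sqrt ε : ℝ) : ℂ) else 0) ?_]
    · rw [Finset.sum_eq_zero (fun l hl => if_neg (by have := Finset.mem_range.1 hl; omega)),
        if_pos rfl, if_neg (by omega), wv, if_pos hj]
      norm_num
    · intro l
      simp only [Md, phiv, Matrix.of_apply]
      split_ifs <;> simp_all <;> omega
  · rw [mulVec_eq_split k (Md k ε) (phiv k i t) j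
      (fun l => if l = k+2 then (((t:ℝ) - (i:ℝ)^k : ℝ) : ℂ) else 0) ?_]
    · rw [Finset.sum_eq_zero (fun l hl => if_neg (by have := Finset.mem_range.1 hl; omega)),
        if_neg (by omega), if_pos rfl, wv, if_neg (by omega), if_pos hj]
      norm_num
    · intro l
      simp only [Md, phiv, Matrix.of_apply]
      split_ifs <;> simp_all <;> omega
  · rw [mulVec_eq_split k (Md k ε) (phiv k i t) j (fun l => 0) ?_]
    · rw [Finset.sum_const_zero, wv, if_neg (by omega), if_neg (by omega)]
      norm_num
    · intro l
      simp only [Md, phiv, Matrix.of_apply]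
      split_ifs <;> simp_all <;> omega


noncomputable def supOf (M : Matrix (Fin d) (Fin d) ℂ) : Superop (d + d) :=
  mkSup (scaleA M) (Classical.choose (exists_compl M)) (Classical.choose_spec (exists_compl M))

lemma supOf_app (M : Matrix (Fin d) (Fin d) ℂ) (ψ : Fin d → ℂ)
    (γ : Matrix (Fin d) (Fin d) ℂ) :
    ∃ γ', (supOf M).app (pad (fromBlocks (outer ψ) 0 0 γ))
      = pad (fromBlocks (outer (((sc M : ℝ) : ℂ)⁻¹ • (M *ᵥ ψ))) 0 0 γ') := by
  refine ⟨Classical.choose (exists_compl M) * outer ψ * (Classical.choose (exists_compl M))ᴴ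
    + γ, ?_⟩
  rw [supOf, mkSup_app]
  simp only [scaleA, smul_mulVec]

lemma smul_coe_smul (c z : ℝ) (v : Fin d → ℂ) :
    ((c : ℝ) : ℂ)⁻¹ • ((z : ℝ) : ℂ) • v = ((z * c⁻¹ : ℝ) : ℂ) • v := by
  rw [smul_smul]
  push_cast
  ring_nf

lemma foldl_sup (M : Matrix (Fin d) (Fin d) ℂ) (v : ℕ → Fin d → ℂ)
    (hv : ∀ t, M *ᵥ v t = v (t+1)) :
    ∀ (n t₀ : ℕ) (z : ℝ) (γ : Matrix (Fin d) (Fin d) ℂ),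
    ∃ γ', List.foldl (fun ρ _ => (supOf M).app ρ)
        (pad (fromBlocks (outer (((z : ℝ) : ℂ) • v t₀)) 0 0 γ)) (List.replicate n ())
      = pad (fromBlocks (outer (((z * ((sc M)⁻¹) ^ n : ℝ) : ℂ) • v (t₀ + n))) 0 0 γ')
  | 0, t₀, z, γ => ⟨γ, by norm_num⟩
  | (n+1), t₀, z, γ => by
      rw [List.replicate_succ, List.foldl_cons]
      obtain ⟨γ₂, h₂⟩ := supOf_app M (((z : ℝ) : ℂ) • v t₀) γ
      rw [h₂, mulVec_smul, hv t₀, smul_coe_smul]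
      obtain ⟨γ', h'⟩ := foldl_sup M v hv n (t₀+1) (z * (sc M)⁻¹) γ₂
      rw [h']
      refine ⟨γ', ?_⟩
      have h1 : z * (sc M)⁻¹ * ((sc M)⁻¹) ^ n = z * ((sc M)⁻¹) ^ (n+1) := by ring
      have h2 : t₀ + 1 + n = t₀ + (n+1) := by omega
      rw [h1, h2]

lemma rho0_eq (hd : 0 < d) :
    rho0 (d + d)
      = pad (fromBlocks (outer (fun j : Fin d => if j.val = 0 then 1 else 0)) 0 0 0) := by
  ext j j'
  obtain ⟨a, rfl⟩ := finSumFinEquiv.surjective j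
  obtain ⟨b, rfl⟩ := finSumFinEquiv.surjective j'
  simp only [pad, submatrix_apply, Equiv.symm_apply_apply, rho0, of_apply]
  cases a <;> cases b <;>
    simp only [finSumFinEquiv_apply_left, finSumFinEquiv_apply_right,
      fromBlocks_apply₁₁, fromBlocks_apply₁₂, fromBlocks_apply₂₁, fromBlocks_apply₂₂,
      Fin.coe_castAdd, Fin.coe_natAdd, outer, vecMulVec_apply, Matrix.zero_apply,
      Pi.star_apply] <;>
    split_ifs <;> simp_all <;> grind

lemma pad_diag (P γ : Matrix (Fin d) (Fin d) ℂ) (a : Fin d) :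
    pad (fromBlocks P 0 0 γ) (Fin.castAdd d a) (Fin.castAdd d a) = P a a := by
  simp [pad, finSumFinEquiv_symm_apply_castAdd]

lemma outer_diag_re (ψ : Fin d → ℂ) (a : Fin d) :
    (outer ψ a a).re = Complex.normSq (ψ a) := by
  simp [outer, vecMulVec_apply, RCLike.star_def, Complex.mul_conj]

/-- The verifier machine. -/
noncomputable def mach (k : ℕ) (ε : ℝ) : MAPostQFA Unit where
  m := (k+3) + (k+3)
  Eopen := supOf 1
  Eclose := supOf 1
  Ecent := supOf (Mc k)
  Edollar := supOf (Md k ε)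
  Esym := fun _ => supOf (Ma k)
  Qacc := {Fin.castAdd (k+3) ⟨0, by omega⟩}
  Qrej := {Fin.castAdd (k+3) ⟨1, by omega⟩}
  disj := by
    simp only [Finset.disjoint_singleton]
    intro h
    have := congrArg Fin.val h
    simp [Fin.coe_castAdd] at this

lemma psiv_zero (k : ℕ) :
    (fun j : Fin (k+3) => if j.val = 0 then 1 else 0) = psiv k 0 := by
  funext j
  simp only [psiv]
  by_cases h : j.val = 0
  · rw [if_pos h, if_pos (by omega), h, pow_zero]
  · rw [if_neg h]
    by_cases h2 : j.val ≤ k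
    · rw [if_pos h2, Nat.cast_zero, zero_pow h]
    · rw [if_neg h2]

lemma finalRho_eq (k : ℕ) (ε : ℝ) (i n : ℕ) :
    ∃ (z : ℝ) (γ : Matrix (Fin (k+3)) (Fin (k+3)) ℂ), 0 < z ∧
      (mach k ε).finalRho (List.replicate i ()) (List.replicate n ())
        = pad (fromBlocks (outer (((z : ℝ) : ℂ) • wv k ε i n)) 0 0 γ) := by
  have hsc1 : (0:ℝ) < sc (1 : Matrix (Fin (k+3)) (Fin (k+3)) ℂ) := sc_pos _
  have hsca : (0:ℝ) < sc (Ma k) := sc_pos _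
  have hscc : (0:ℝ) < sc (Mc k) := sc_pos _
  have hscd : (0:ℝ) < sc (Md k ε) := sc_pos _
  have key : (mach k ε).finalRho (List.replicate i ()) (List.replicate n ())
      = (supOf (Md k ε)).app
          (List.foldl (fun ρ _ => (supOf (Ma k)).app ρ)
            ((supOf (Mc k)).app
              ((supOf (1 : Matrix (Fin (k+3)) (Fin (k+3)) ℂ)).app
                (List.foldl (fun ρ _ => (supOf (Ma k)).app ρ)
                  ((supOf (1 : Matrix (Fin (k+3)) (Fin (k+3)) ℂ)).app
                    (rho0 ((k+3) + (k+3))))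
                  (List.replicate i ()))))
            (List.replicate n ())) := rfl
  rw [key]
  -- initial state
  have h0 : rho0 ((k+3) + (k+3))
      = pad (fromBlocks (outer (((1 : ℝ) : ℂ) • psiv k 0)) 0 0 0) := by
    rw [rho0_eq (by omega), psiv_zero]
    norm_num
  rw [h0]
  -- open marker
  obtain ⟨γ₁, h₁⟩ := supOf_app (1 : Matrix (Fin (k+3)) (Fin (k+3)) ℂ)
    (((1 : ℝ) : ℂ) • psiv k 0) 0
  rw [h₁, one_mulVec, smul_coe_smul]
  -- certificate
  obtain ⟨γ₂, h₂⟩ := foldl_sup (Ma k) (psiv k) (Ma_psiv k) i 0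
    (1 * (sc (1 : Matrix (Fin (k+3)) (Fin (k+3)) ℂ))⁻¹) γ₁
  rw [h₂]
  -- close marker
  obtain ⟨γ₃, h₃⟩ := supOf_app (1 : Matrix (Fin (k+3)) (Fin (k+3)) ℂ) _ γ₂
  rw [h₃, one_mulVec, smul_coe_smul]
  -- cent marker
  obtain ⟨γ₄, h₄⟩ := supOf_app (Mc k) _ γ₃
  rw [h₄, mulVec_smul, Nat.zero_add, Mc_psiv, smul_coe_smul]
  -- input
  obtain ⟨γ₅, h₅⟩ := foldl_sup (Ma k) (phiv k i) (Ma_phiv k i) n 0 _ γ₄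
  rw [h₅]
  -- dollar marker
  obtain ⟨γ₆, h₆⟩ := supOf_app (Md k ε) _ γ₅
  rw [h₆, mulVec_smul, Nat.zero_add, Md_phiv, smul_coe_smul]
  refine ⟨_, γ₆, ?_, rfl⟩
  positivity

end UPolyProof

/-- for every `k ≥ 2` and `0 < ε < 1/2` there is a unary MA-PostQFA verifying
`UPOLY(k) = { a^(i^k) }` with bounded error, using certificates of length `n^(1/k)` for
members. -/
theorem mapostqfa_upoly (k : ℕ) (hk : 2 ≤ k) (ε : ℝ) (hε0 : 0 < ε) (hε : ε < 1 / 2) :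
    ∃ M : MAPostQFA Unit,
      (∀ i n : ℕ,
        0 < M.aPr (List.replicate i ()) (List.replicate n ()) +
            M.rPr (List.replicate i ()) (List.replicate n ())) ∧
      (∀ i : ℕ, 1 - ε ≤ M.accProb (List.replicate i ()) (List.replicate (i ^ k) ())) ∧
      (∀ n : ℕ, (¬ ∃ i : ℕ, n = i ^ k) → ∀ i : ℕ,
        1 - ε ≤ M.rejProb (List.replicate i ()) (List.replicate n ())) := by
  classical
  open UPolyProof in
  have hε' : 0 ≤ ε := le_of_lt hε0
  have hQ : ∀ i n : ℕ, ∃ Z : ℝ, 0 < Z ∧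
      (mach k ε).aPr (List.replicate i ()) (List.replicate n ()) = Z * ε ∧
      (mach k ε).rPr (List.replicate i ()) (List.replicate n ())
        = Z * (((n:ℝ) - (i:ℝ)^k) * ((n:ℝ) - (i:ℝ)^k)) := by
    intro i n
    obtain ⟨z, γ, hz, hfr⟩ := finalRho_eq k ε i n
    refine ⟨z * z, mul_pos hz hz, ?_, ?_⟩
    · rw [MAPostQFA.aPr,
        show (mach k ε).Qacc = {Fin.castAdd (k+3) (⟨0, by omega⟩ : Fin (k+3))} from rfl]
      erw [Finset.sum_singleton]
      rw [hfr, pad_diag, outer_diag_re]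
      have hv : (((z : ℝ) : ℂ) • wv k ε i n) (⟨0, by omega⟩ : Fin (k+3))
          = ((z * Real.sqrt ε : ℝ) : ℂ) := by
        simp only [Pi.smul_apply, wv, smul_eq_mul]
        norm_num
      rw [hv, Complex.normSq_ofReal]
      rw [mul_mul_mul_comm, Real.mul_self_sqrt hε']
    · rw [MAPostQFA.rPr,
        show (mach k ε).Qrej = {Fin.castAdd (k+3) (⟨1, by omega⟩ : Fin (k+3))} from rfl]
      erw [Finset.sum_singleton]
      rw [hfr, pad_diag, outer_diag_re]
      have hv : (((z : ℝ) : ℂ) • wv k ε i n) (⟨1, by omega⟩ : Fin (k+3))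
          = ((z * ((n:ℝ) - (i:ℝ)^k) : ℝ) : ℂ) := by
        simp only [Pi.smul_apply, wv, smul_eq_mul]
        norm_num
      rw [hv, Complex.normSq_ofReal]
      ring
  refine ⟨mach k ε, ?_, ?_, ?_⟩
  · intro i n
    obtain ⟨Z, hZ, ha, hr⟩ := hQ i n
    rw [ha, hr]
    nlinarith [mul_self_nonneg ((n:ℝ) - (i:ℝ)^k)]
  · intro i
    obtain ⟨Z, hZ, ha, hr⟩ := hQ i (i ^ k)
    have hD : ((i ^ k : ℕ) : ℝ) - (i:ℝ)^k = 0 := by push_cast; ring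
    rw [MAPostQFA.accProb, ha, hr, hD]
    have hpos : 0 < Z * ε := mul_pos hZ hε0
    rw [show Z * ((0:ℝ) * 0) = 0 by ring, add_zero, div_self (ne_of_gt hpos)]
    linarith
  · intro n hn i
    obtain ⟨Z, hZ, ha, hr⟩ := hQ i n
    have hne : n ≠ i ^ k := fun h => hn ⟨i, h⟩
    have hD : (i:ℝ)^k = ((i ^ k : ℕ) : ℝ) := by push_cast; ring
    have hT : 1 ≤ ((n:ℝ) - (i:ℝ)^k) * ((n:ℝ) - (i:ℝ)^k) := by
      rw [hD]
      rcases Nat.lt_or_ge n (i ^ k) with h | h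
      · have : (n:ℝ) + 1 ≤ ((i ^ k : ℕ) : ℝ) := by exact_mod_cast h
        nlinarith
      · have h2 : i ^ k < n := lt_of_le_of_ne h (Ne.symm hne)
        have : ((i ^ k : ℕ) : ℝ) + 1 ≤ (n:ℝ) := by exact_mod_cast h2
        nlinarith
    set T := ((n:ℝ) - (i:ℝ)^k) * ((n:ℝ) - (i:ℝ)^k) with hTdef
    rw [MAPostQFA.rejProb, ha, hr]
    have hsum : Z * ε + Z * T = Z * (ε + T) := by ring
    rw [hsum, mul_div_mul_left _ _ (ne_of_gt hZ)]
    rw [le_div_iff₀ (by nlinarith)]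
    nlinarith
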